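/- arXiv:1505.02334 — 2 statements merged into one kernel-verified Lean document; each statement's English description precedes it below -/
import Mathlib

section
/- Let φ : ℝᵐ → (-∞, +∞] be proper, convex, lower semicontinuous and let φ^α(x) = inf_{y∈ℝᵐ} { φ(y) + |y - x|²/(2α) } be its Moreau–Yosida regularization. Suppose φ_ε is a family of proper convex lsc functions with φ_ε(x) → φ(x) pointwise as ε↓0 for every x in the common domain D, all φ_ε having domain D. Then for every α > 0 and every x, lim_{ε↓0} φ_ε^α(x) = φ^α(x). -/
open scoped RealInnerProductSpace

/-- Moreau–Yosida regularization of an extended-real-valued function. -/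
noncomputable def moreauEnv {m : ℕ} (φ : EuclideanSpace ℝ (Fin m) → EReal) (α : ℝ)
    (x : EuclideanSpace ℝ (Fin m)) : EReal :=
  ⨅ y, φ y + ((‖y - x‖ ^ 2 / (2 * α) : ℝ) : EReal)

namespace MoreauAux

open Filter Set Topology

variable {E : Type*} [NormedAddCommGroup E] [InnerProductSpace ℝ E]

/-- binary convexity property for `EReal`-valued functions -/
def BinConvex (g : E → EReal) : Prop :=
  ∀ (x y : E) (a b : ℝ), 0 ≤ a → 0 ≤ b → a + b = 1 →
    g (a • x + b • y) ≤ (a : EReal) * g x + (b : EReal) * g y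

lemma pert_bound (g : E → EReal) (hg : BinConvex g) (M : ℝ) (w : E) (hw : g w ≤ (M : EReal)) :
    ∀ (l : List (ℝ × E)) (t : ℝ), 0 < t → (∀ p ∈ l, 0 ≤ p.1) →
      t * (l.map Prod.fst).sum < 1 →
      (∀ p ∈ l, g (w + p.2) ≤ (M : EReal)) →
      g (w + t • (l.map (fun p => p.1 • p.2)).sum) ≤ (M : EReal) := by
  intro l
  induction l with
  | nil => intro t _ _ _ _; simpa using hw
  | cons hd tl ih =>
    intro t ht hpos hsum hpt
    obtain ⟨a, d⟩ := hd
    simp only [List.map_cons, List.sum_cons] at hsum ⊢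
    have ha : 0 ≤ a := hpos _ List.mem_cons_self
    have hS : 0 ≤ (tl.map Prod.fst).sum := by
      apply List.sum_nonneg
      intro x hx
      obtain ⟨p, hp, rfl⟩ := List.mem_map.1 hx
      exact hpos _ (List.mem_cons_of_mem _ hp)
    set a' : ℝ := t * a with ha'
    have ha'0 : 0 ≤ a' := mul_nonneg ht.le ha
    have ha'1 : a' < 1 := by nlinarith
    have h1a : (0:ℝ) < 1 - a' := by linarith
    set t' : ℝ := t / (1 - a') with ht'
    have ht'0 : 0 < t' := div_pos ht h1a
    have hkey : w + t • (a • d + (tl.map (fun p => p.1 • p.2)).sum)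
        = a' • (w + d) + (1 - a') • (w + t' • (tl.map (fun p => p.1 • p.2)).sum) := by
      rw [ht', ha']
      match_scalars
      · ring
      · ring
      · have hne : (1:ℝ) - t * a ≠ 0 := ne_of_gt (by linarith)
        field_simp
    have ihapp : g (w + t' • (tl.map (fun p => p.1 • p.2)).sum) ≤ (M : EReal) := by
      apply ih t' ht'0
      · intro p hp; exact hpos _ (List.mem_cons_of_mem _ hp)
      · rw [ht', div_mul_eq_mul_div, div_lt_one h1a]
        nlinarith
      · intro p hp; exact hpt _ (List.mem_cons_of_mem _ hp)
    calc g (w + t • (a • d + (tl.map (fun p => p.1 • p.2)).sum))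
        = g (a' • (w + d) + (1 - a') • (w + t' • (tl.map (fun p => p.1 • p.2)).sum)) := by
          rw [hkey]
      _ ≤ (a' : EReal) * g (w + d)
          + ((1 - a' : ℝ) : EReal) * g (w + t' • (tl.map (fun p => p.1 • p.2)).sum) :=
          hg _ _ a' (1 - a') ha'0 (by linarith) (by ring)
      _ ≤ (a' : EReal) * (M : EReal) + ((1 - a' : ℝ) : EReal) * (M : EReal) :=
          add_le_add
            (mul_le_mul_of_nonneg_left (hpt _ List.mem_cons_self)
              (EReal.coe_nonneg.2 ha'0))
            (mul_le_mul_of_nonneg_left ihapp (EReal.coe_nonneg.2 h1a.le))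
      _ = (M : EReal) := by
          rw [← EReal.coe_mul, ← EReal.coe_mul, ← EReal.coe_add, EReal.coe_eq_coe_iff]
          ring


lemma intrinsic_ball {D : Set E} {w : E} (hw : w ∈ intrinsicInterior ℝ D) :
    ∃ r > 0, ∀ u ∈ (affineSpan ℝ D : Set E), dist u w < r → u ∈ D := by
  obtain ⟨y, hy, rfl⟩ := (mem_intrinsicInterior).1 hw
  rw [mem_interior_iff_mem_nhds, Metric.mem_nhds_iff] at hy
  obtain ⟨r, hr, hball⟩ := hy
  refine ⟨r, hr, fun u hu hdist => ?_⟩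
  have : (⟨u, hu⟩ : affineSpan ℝ D) ∈ Metric.ball y r := by
    rw [Metric.mem_ball, Subtype.dist_eq]
    exact hdist
  exact hball this


lemma upper_box [FiniteDimensional ℝ E] {D : Set E} {w : E}
    (hw : w ∈ intrinsicInterior ℝ D) :
    ∃ r > 0, ∃ P : Finset E, (↑P ⊆ D) ∧ w ∈ P ∧
      (∀ u ∈ (affineSpan ℝ D : Set E), dist u w < r → u ∈ D) ∧
      ∀ (g : E → EReal) (M : ℝ), BinConvex g → (∀ p ∈ P, g p ≤ (M : EReal)) →
        ∀ u ∈ (affineSpan ℝ D : Set E), dist u w < r → g u ≤ (M : EReal) := by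
  classical
  have hwD : w ∈ D := intrinsicInterior_subset hw
  have hwspan : w ∈ affineSpan ℝ D := subset_affineSpan ℝ D hwD
  obtain ⟨r0, hr0, hball⟩ := intrinsic_ball hw
  set V := (affineSpan ℝ D).direction with hV
  set k := Module.finrank ℝ V with hk
  set B := stdOrthonormalBasis ℝ V with hB
  have hBnorm : ∀ i : Fin k, ‖((B i : V) : E)‖ = 1 := fun i => B.orthonormal.1 i
  -- the finitely many points
  set P : Finset E := insert w
      ((Finset.image (fun i : Fin k => w + (r0/2) • ((B i : V) : E)) Finset.univ) ∪
       (Finset.image (fun i : Fin k => w - (r0/2) • ((B i : V) : E)) Finset.univ)) with hP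
  have hmemD : ∀ (s : ℝ), |s| = r0/2 → ∀ i : Fin k, w + s • ((B i : V) : E) ∈ D := by
    intro s hs i
    apply hball
    · have : s • ((B i : V) : E) +ᵥ w ∈ affineSpan ℝ D :=
        AffineSubspace.vadd_mem_of_mem_direction
          (V.smul_mem s (SetLike.coe_mem (B i))) hwspan
      simpa [vadd_eq_add, add_comm] using this
    · rw [dist_eq_norm, add_sub_cancel_left, norm_smul, hBnorm i, mul_one,
        Real.norm_eq_abs, hs]
      linarith
  have hPD : (↑P : Set E) ⊆ D := by
    intro p hp
    simp only [hP, Finset.coe_insert, Set.mem_insert_iff, Finset.coe_union,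
      Set.mem_union, Finset.coe_image, Set.mem_image, Finset.mem_coe,
      Finset.mem_univ, true_and, Finset.coe_univ, Set.mem_univ] at hp
    rcases hp with rfl | ⟨⟨i, _, rfl⟩ | ⟨i, _, rfl⟩⟩
    · exact hwD
    · exact hmemD (r0/2) (abs_of_pos (by positivity)) i
    · rw [sub_eq_add_neg, ← neg_smul]
      exact hmemD (-(r0/2)) (by rw [abs_neg, abs_of_pos (by positivity)]) i
  refine ⟨r0 / (2 * (k + 1)), by positivity, P, hPD, Finset.mem_insert_self _ _,
    fun u hu hdist => hball u hu (lt_of_lt_of_le hdist (by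
      rw [div_le_iff₀ (by positivity)]
      nlinarith [hr0])), ?_⟩
  intro g M hg hPg u huspan hdist
  have hv : u - w ∈ V := by
    have := AffineSubspace.vsub_mem_direction huspan hwspan
    simpa [vsub_eq_sub] using this
  set vv : V := ⟨u - w, hv⟩ with hvv
  set c : Fin k → ℝ := fun i => B.repr vv i with hc
  have hrepr : ∑ i, c i • B i = vv := B.sum_repr vv
  have hnv : ‖vv‖ < r0 / (2 * (k + 1)) := by
    have : ‖vv‖ = ‖u - w‖ := rfl
    rw [this, ← dist_eq_norm]
    exact hdist
  have hci : ∀ i, |c i| ≤ ‖vv‖ := by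
    intro i
    have h := abs_real_inner_le_norm (B i) vv
    rw [show ‖B i‖ = 1 from B.orthonormal.1 i, one_mul] at h
    rw [hc]
    simpa [B.repr_apply_apply] using h
  set l : List (ℝ × E) := List.ofFn
      (fun i : Fin k => (|c i|, (if 0 ≤ c i then (r0/2) else -(r0/2)) • ((B i : V) : E))) with hl
  set t : ℝ := 2 / r0 with ht
  have hsum_eq : w + t • (l.map (fun p => p.1 • p.2)).sum = u := by
    rw [hl, List.map_ofFn, List.sum_ofFn]
    have h2 : ∀ i : Fin k,
        ((fun (p : ℝ × E) => p.1 • p.2) ∘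
          (fun i : Fin k => (|c i|, (if 0 ≤ c i then (r0/2) else -(r0/2)) • ((B i : V) : E)))) i
        = (|c i| * (if 0 ≤ c i then (r0/2) else -(r0/2))) • ((B i : V) : E) := by
      intro i
      simp [Function.comp, smul_smul]
    rw [Finset.sum_congr rfl fun i _ => h2 i, Finset.smul_sum]
    have h3 : ∀ i : Fin k,
        t • (|c i| * (if 0 ≤ c i then (r0/2) else -(r0/2))) • ((B i : V) : E)
        = c i • ((B i : V) : E) := by
      intro i
      rw [smul_smul]
      congr 1
      by_cases h : 0 ≤ c i
      · rw [if_pos h, abs_of_nonneg h, ht]; field_simp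
      · rw [if_neg h, abs_of_neg (lt_of_not_ge h), ht]; field_simp
    rw [Finset.sum_congr rfl fun i _ => h3 i]
    have h4 : ∑ i, c i • ((B i : V) : E) = u - w := by
      have := congrArg (V.subtype) hrepr
      simpa [map_sum] using this
    rw [h4]
    abel
  have hgw : g w ≤ (M : EReal) := hPg w (Finset.mem_insert_self _ _)
  have := pert_bound g hg M w hgw l t (by rw [ht]; positivity)
    (by
      intro p hp
      rw [hl, List.mem_ofFn] at hp
      obtain ⟨i, rfl⟩ := hp
      exact abs_nonneg _)
    (by
      have h5 : (l.map Prod.fst) = List.ofFn (fun i : Fin k => |c i|) := by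
        rw [hl, List.map_ofFn]; rfl
      rw [h5, List.sum_ofFn]
      have h6 : ∑ i : Fin k, |c i| ≤ (k : ℝ) * ‖vv‖ := by
        calc ∑ i : Fin k, |c i| ≤ ∑ _i : Fin k, ‖vv‖ := Finset.sum_le_sum fun i _ => hci i
          _ = (k : ℝ) * ‖vv‖ := by rw [Finset.sum_const, Finset.card_univ, Fintype.card_fin,
            nsmul_eq_mul]
      have hnn : (0:ℝ) ≤ ‖vv‖ := norm_nonneg _
      rw [ht]
      rw [div_mul_eq_mul_div, div_lt_one hr0]
      have : (2:ℝ) * ((k:ℝ) * ‖vv‖) < r0 := by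
        have hklt : ‖vv‖ * (2 * ((k:ℝ) + 1)) < r0 := by
          rw [← lt_div_iff₀ (by positivity)]
          exact hnv
        nlinarith [hklt, hnn]
      linarith [h6, this])
    (by
      intro p hp
      rw [hl, List.mem_ofFn] at hp
      obtain ⟨i, rfl⟩ := hp
      simp only
      by_cases h : 0 ≤ c i
      · rw [if_pos h]
        apply hPg
        rw [hP]
        apply Finset.mem_insert_of_mem
        apply Finset.mem_union_left
        exact Finset.mem_image.2 ⟨i, Finset.mem_univ i, rfl⟩
      · rw [if_neg h, neg_smul, ← sub_eq_add_neg]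
        apply hPg
        rw [hP]
        apply Finset.mem_insert_of_mem
        apply Finset.mem_union_right
        exact Finset.mem_image.2 ⟨i, Finset.mem_univ i, rfl⟩)
  rw [hsum_eq] at this
  exact this


lemma farfield (v x : E) (cst α t : ℝ) (hα : 0 < α) :
    ∃ R > 0, ∀ y : E, R ≤ ‖y - x‖ → t ≤ ⟪v, y⟫ + cst + ‖y - x‖ ^ 2 / (2 * α) := by
  set s : ℝ := |t| + |cst| + |⟪v, x⟫| with hs
  have hs0 : 0 ≤ s := by positivity
  refine ⟨2*α*‖v‖ + 6*α*s + 1, by positivity, ?_⟩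
  intro y hy
  have h1 : ⟪v, y - x⟫ = ⟪v, y⟫ - ⟪v, x⟫ := inner_sub_right v y x
  have h2 : |⟪v, y - x⟫| ≤ ‖v‖ * ‖y - x‖ := abs_real_inner_le_norm _ _
  set r : ℝ := ‖y - x‖ with hr
  have hr0 : (0:ℝ) ≤ r := norm_nonneg _
  have hr1 : (1:ℝ) ≤ r := by nlinarith [norm_nonneg v]
  have hQ : (r ^ 2 / (2 * α)) * (2 * α) = r ^ 2 := by field_simp
  have hkey : r * (r - 2*α*‖v‖ - 6*α*s - 1) ≥ 0 :=
    mul_nonneg hr0 (by linarith)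
  have hsr : 6*α*s*r ≥ 6*α*s := by
    nlinarith [mul_nonneg (mul_nonneg (by linarith : (0:ℝ) ≤ 6*α) hs0)
      (by linarith : (0:ℝ) ≤ r - 1)]
  have habs1 : -(‖v‖ * r) ≤ ⟪v, y⟫ - ⟪v, x⟫ := by
    rw [← h1]; exact neg_le_of_abs_le h2
  have ht1 : t ≤ s := by
    rw [hs]; linarith [le_abs_self t, abs_nonneg cst, abs_nonneg (⟪v, x⟫ : ℝ)]
  have ht2 : -s ≤ cst := by
    rw [hs]; linarith [neg_abs_le cst, abs_nonneg t, abs_nonneg (⟪v, x⟫ : ℝ)]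
  have ht3 : -s ≤ ⟪v, x⟫ := by
    rw [hs]; linarith [neg_abs_le (⟪v, x⟫ : ℝ), abs_nonneg t, abs_nonneg cst]
  -- r^2 ≥ 2α‖v‖ r + 2αs + r  ⇒ Q ≥ ‖v‖r + s
  have hQ2 : r ^ 2 / (2 * α) ≥ ‖v‖ * r + 3*s := by
    rw [ge_iff_le, ← mul_le_mul_iff_left₀ (by positivity : (0:ℝ) < 2*α)]
    rw [hQ]
    nlinarith
  nlinarith

set_option maxHeartbeats 1000000 in
lemma local_bound [FiniteDimensional ℝ E]
    (φ : E → EReal) (φs : ℝ → E → EReal) (D : Set E)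
    (hD : D = {x | φ x < ⊤})
    (hDeps : ∀ ε ∈ Set.Ioo (0:ℝ) 1, {x | φs ε x < ⊤} = D)
    (hconv' : ∀ ε ∈ Set.Ioo (0:ℝ) 1, BinConvex (φs ε))
    (hlsc : LowerSemicontinuous φ)
    (v : E) (cst : ℝ)
    (hlv : ∀ x, ((⟪v, x⟫ + cst : ℝ) : EReal) ≤ φ x)
    (hlv' : ∀ ε ∈ Set.Ioo (0:ℝ) 1, ∀ x, ((⟪v, x⟫ + cst : ℝ) : EReal) ≤ φs ε x)
    (hpt : ∀ x ∈ D, Tendsto (fun ε => φs ε x) (𝓝[>] (0:ℝ)) (𝓝 (φ x)))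
    (hmemD : ∀ a b : E, a ∈ D → b ∈ D → ∀ s : ℝ, 0 ≤ s → s ≤ 1 → ((1 - s) • a + s • b) ∈ D)
    (w : E) (hw : w ∈ intrinsicInterior ℝ D)
    (q : E → ℝ) (hq : Continuous q)
    (y₀ : E) (t t₂ : ℝ) (ht : t < t₂) (ht₂ : (t₂ : EReal) < φ y₀ + (q y₀ : EReal)) :
    ∃ ρ > 0, ∀ᶠ ε in 𝓝[>] (0:ℝ), ∀ y, dist y y₀ < ρ →
      (t : EReal) ≤ φs ε y + (q y : EReal) := by
  classical
  have hIoo : ∀ᶠ ε in 𝓝[>] (0:ℝ), ε ∈ Set.Ioo (0:ℝ) 1 :=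
    Ioo_mem_nhdsGT_of_mem ⟨le_refl 0, one_pos⟩
  by_cases hy₀ : y₀ ∈ closure D
  case neg =>
    obtain ⟨ρ, hρ, hsub⟩ := Metric.mem_nhds_iff.1 (isClosed_closure.isOpen_compl.mem_nhds hy₀)
    refine ⟨ρ, hρ, ?_⟩
    filter_upwards [hIoo] with ε hε y hy
    have hyD : y ∉ D := fun h => hsub (Metric.mem_ball.2 hy) (subset_closure h)
    have htop : φs ε y = ⊤ := by
      by_contra h
      exact hyD (by rw [← hDeps ε hε]; exact lt_top_iff_ne_top.2 h)
    rw [htop, EReal.top_add_coe]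
    exact le_top
  case pos =>
    set δ : ℝ := (t₂ - t) / 2 with hδdef
    have hδ : 0 < δ := by rw [hδdef]; linarith
    have ht₂δ' : t₂ = t + 2*δ := by rw [hδdef]; ring
    clear_value δ
    clear hδdef
    obtain ⟨ρ₁, hρ₁, hball₁⟩ := Metric.eventually_nhds_iff_ball.1
      (hq.continuousAt.eventually (lt_mem_nhds (show q y₀ - δ < q y₀ by linarith)))
    have hφy₀ : ((t₂ - q y₀ : ℝ) : EReal) < φ y₀ := by
      by_contra hcon
      push_neg at hcon
      have h2 : φ y₀ + (q y₀ : EReal) ≤ ((t₂ - q y₀ : ℝ) : EReal) + (q y₀ : EReal) :=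
        add_le_add_left hcon _
      rw [← EReal.coe_add, sub_add_cancel] at h2
      exact absurd (lt_of_lt_of_le ht₂ h2) (lt_irrefl _)
    obtain ⟨b, hb1, hb2⟩ := EReal.exists_between_coe_real hφy₀
    have hb1' : t₂ - q y₀ < b := EReal.coe_lt_coe_iff.1 hb1
    obtain ⟨ρ₂, hρ₂, hball₂⟩ := Metric.eventually_nhds_iff_ball.1 (hlsc y₀ (b : EReal) hb2)
    obtain ⟨r2, hr2, P, hPD, hwP, hball3, hjensen⟩ := upper_box hw
    have hPne : P.Nonempty := ⟨w, hwP⟩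
    set M : ℝ := max (P.sup' hPne fun p => (φ p).toReal + 1) (b + 1) with hM
    have hMb : b + 1 ≤ M := le_max_right _ _
    have hMp : ∀ p ∈ P, ((φ p).toReal + 1) ≤ M := fun p hp =>
      le_trans (Finset.le_sup' (fun p => (φ p).toReal + 1) hp) (le_max_left _ _)
    have hφp_real : ∀ p ∈ P, φ p ≠ ⊤ ∧ φ p ≠ ⊥ := by
      intro p hp
      have hpD : p ∈ D := hPD hp
      refine ⟨?_, ?_⟩
      · rw [hD] at hpD
        exact lt_top_iff_ne_top.1 hpD
      · exact (lt_of_lt_of_le (EReal.bot_lt_coe _) (hlv p)).ne'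
    have hevP : ∀ᶠ ε in 𝓝[>] (0:ℝ), ∀ p ∈ P, φs ε p ≤ (M : EReal) := by
      rw [Filter.eventually_all_finset]
      intro p hp
      have h1 : φ p < (M : EReal) := by
        obtain ⟨hnt, hnb⟩ := hφp_real p hp
        rw [← EReal.coe_toReal hnt hnb]
        exact EReal.coe_lt_coe_iff.2 (by have := hMp p hp; linarith)
      exact (hpt p (hPD hp)).eventually ((gt_mem_nhds h1).mono fun x hx => hx.le)
    set C : ℝ := ‖w - y₀‖ + 1 with hC
    have hC1 : 1 ≤ C := le_add_of_nonneg_left (norm_nonneg _)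
    have hwy₀' : ‖w - y₀‖ = C - 1 := by rw [hC]; ring
    clear_value C
    clear hC
    clear_value M
    clear hM
    have hMbδ : (0:ℝ) < 2 * (M - b + δ + 1) := by nlinarith
    set θ : ℝ := min (1/2) (min (ρ₂ / (4 * C)) (δ / (2 * (M - b + δ + 1)))) with hθdef
    have hθpos : 0 < θ :=
      lt_min (by norm_num) (lt_min (div_pos hρ₂ (by linarith)) (div_pos hδ hMbδ))
    have hθhalf : θ ≤ 1/2 := min_le_left _ _
    have hθρ₂ : θ ≤ ρ₂ / (4 * C) := le_trans (min_le_right _ _) (min_le_left _ _)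
    have hθδ : θ ≤ δ / (2 * (M - b + δ + 1)) := le_trans (min_le_right _ _) (min_le_right _ _)
    have hθδ' : θ * (2 * (M - b + δ + 1)) ≤ δ := by
      rw [← le_div_iff₀ hMbδ]; exact hθδ
    have hθ1 : θ < 1 := lt_of_le_of_lt hθhalf (by norm_num)
    clear_value θ
    clear hθdef
    have hmin_pos : 0 < min (ρ₂/2) (min 1 (θ * r2 / 2)) :=
      lt_min (by linarith) (lt_min one_pos (by positivity))
    obtain ⟨p, hpD, hpdist⟩ := Metric.mem_closure_iff.1 hy₀ _ hmin_pos
    have hpρ₂ : dist y₀ p < ρ₂ / 2 := lt_of_lt_of_le hpdist (min_le_left _ _)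
    have hp1 : dist y₀ p < 1 := lt_of_lt_of_le hpdist (le_trans (min_le_right _ _) (min_le_left _ _))
    have hpr2 : dist y₀ p < θ * r2 / 2 :=
      lt_of_lt_of_le hpdist (le_trans (min_le_right _ _) (min_le_right _ _))
    obtain ⟨zs, hzs⟩ : ∃ z : E, z = (1 - θ) • p + θ • w := ⟨_, rfl⟩
    have hzsD : zs ∈ D := by
      rw [hzs]
      exact hmemD p w hpD (intrinsicInterior_subset hw) θ hθpos.le hθ1.le
    have hwy₀ : ‖w - y₀‖ = C - 1 := hwy₀'
    have hzs_near : dist zs y₀ < ρ₂ := by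
      have h1 : zs - y₀ = (1 - θ) • (p - y₀) + θ • (w - y₀) := by
        rw [hzs]; module
      rw [dist_eq_norm, h1]
      have h2 : ‖(1 - θ) • (p - y₀) + θ • (w - y₀)‖
          ≤ ‖(1 - θ) • (p - y₀)‖ + ‖θ • (w - y₀)‖ := norm_add_le _ _
      rw [norm_smul, norm_smul, Real.norm_eq_abs, Real.norm_eq_abs,
        abs_of_nonneg (by linarith : (0:ℝ) ≤ 1 - θ), abs_of_nonneg hθpos.le] at h2
      have h3 : ‖p - y₀‖ < ρ₂ / 2 := by
        rw [← dist_eq_norm, dist_comm]; exact hpρ₂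
      have h4 : θ * ‖w - y₀‖ ≤ ρ₂ / 4 := by
        rw [hwy₀]
        rw [le_div_iff₀ (by linarith : (0:ℝ) < 4*C)] at hθρ₂
        nlinarith [hθpos.le]
      have h5 : (1 - θ) * ‖p - y₀‖ ≤ ‖p - y₀‖ := by nlinarith [norm_nonneg (p - y₀)]
      calc ‖(1 - θ) • (p - y₀) + θ • (w - y₀)‖
          ≤ (1-θ) * ‖p - y₀‖ + θ * ‖w - y₀‖ := h2
        _ < ρ₂ := by nlinarith
    have hbzs : (b : EReal) < φ zs := hball₂ zs (Metric.mem_ball.2 hzs_near)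
    have hevz : ∀ᶠ ε in 𝓝[>] (0:ℝ), (b : EReal) < φs ε zs :=
      (hpt zs hzsD).eventually (lt_mem_nhds hbzs)
    refine ⟨min ρ₁ (θ * r2 / 2), lt_min hρ₁ (by positivity), ?_⟩
    filter_upwards [hIoo, hevP, hevz] with ε hε hεP hεz
    intro y hy
    have hyρ₁ : dist y y₀ < ρ₁ := lt_of_lt_of_le hy (min_le_left _ _)
    have hyr2 : dist y y₀ < θ * r2 / 2 := lt_of_lt_of_le hy (min_le_right _ _)
    have hyq : q y₀ - δ < q y := hball₁ y (Metric.mem_ball.2 hyρ₁)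
    by_cases hyD : y ∈ D
    case neg =>
      have htop : φs ε y = ⊤ := by
        by_contra h
        exact hyD (by rw [← hDeps ε hε]; exact lt_top_iff_ne_top.2 h)
      rw [htop, EReal.top_add_coe]
      exact le_top
    case pos =>
      by_cases hytop : φs ε y = ⊤
      · rw [hytop, EReal.top_add_coe]; exact le_top
      have hybot : φs ε y ≠ ⊥ := (lt_of_lt_of_le (EReal.bot_lt_coe _) (hlv' ε hε y)).ne'
      set a : ℝ := (φs ε y).toReal with ha
      have hay : φs ε y = (a : EReal) := (EReal.coe_toReal hytop hybot).symm
      clear_value a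
      clear ha
      obtain ⟨zy, hzy⟩ : ∃ z : E, z = y + θ⁻¹ • (zs - y) := ⟨_, rfl⟩
      have hzyspan : zy ∈ affineSpan ℝ D := by
        have h1 := (affineSpan ℝ D).smul_vsub_vadd_mem' θ⁻¹
          (subset_affineSpan ℝ D hzsD) (subset_affineSpan ℝ D hyD) (subset_affineSpan ℝ D hyD)
        rw [hzy]
        simpa [vsub_eq_sub, vadd_eq_add, add_comm] using h1
      have hzyw_eq : zy - w = (θ⁻¹ - 1) • (p - y) := by
        rw [hzy, hzs]; match_scalars <;> (field_simp; try ring)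
      have hpy : ‖p - y‖ < θ * r2 := by
        calc ‖p - y‖ = ‖(p - y₀) + (y₀ - y)‖ := by abel_nf
          _ ≤ ‖p - y₀‖ + ‖y₀ - y‖ := norm_add_le _ _
          _ < θ * r2 / 2 + θ * r2 / 2 := by
              apply add_lt_add
              · rw [← dist_eq_norm, dist_comm]; exact hpr2
              · rw [← dist_eq_norm, dist_comm]; exact hyr2
          _ = θ * r2 := by ring
      have hzyw : dist zy w < r2 := by
        rw [dist_eq_norm, hzyw_eq, norm_smul, Real.norm_eq_abs]
        have hinv1 : (1:ℝ) ≤ θ⁻¹ := by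
          rw [le_inv_comm₀ one_pos hθpos]; linarith
        rw [abs_of_nonneg (by linarith : (0:ℝ) ≤ θ⁻¹ - 1)]
        have h6 : (θ⁻¹ - 1) * ‖p - y‖ ≤ θ⁻¹ * ‖p - y‖ := by
          nlinarith [norm_nonneg (p - y)]
        have h7 : θ⁻¹ * ‖p - y‖ < θ⁻¹ * (θ * r2) :=
          mul_lt_mul_of_pos_left hpy (inv_pos.2 hθpos)
        have h8 : θ⁻¹ * (θ * r2) = r2 := by field_simp
        linarith
      have hzyD : zy ∈ D := hball3 zy hzyspan hzyw
      have hzyM : φs ε zy ≤ (M : EReal) := hjensen (φs ε) M (hconv' ε hε) hεP zy hzyspan hzyw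
      have hcc : (1 - θ) • y + θ • zy = zs := by
        rw [hzy]; match_scalars <;> (field_simp; try ring)
      have happ := hconv' ε hε y zy (1 - θ) θ (by linarith) hθpos.le (by ring)
      rw [hcc] at happ
      have hchain : (b : EReal) < (((1 - θ) * a + θ * M : ℝ) : EReal) := by
        calc (b:EReal) < φs ε zs := hεz
          _ ≤ ((1-θ : ℝ):EReal) * φs ε y + (θ:EReal) * φs ε zy := happ
          _ ≤ ((1-θ : ℝ):EReal) * (a:EReal) + (θ:EReal) * (M:EReal) :=
              add_le_add (by rw [hay]) (mul_le_mul_of_nonneg_left hzyM (EReal.coe_nonneg.2 hθpos.le))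
          _ = (((1-θ)*a + θ*M : ℝ):EReal) := by rw [EReal.coe_add, EReal.coe_mul, EReal.coe_mul]
      have hbreal : b < (1-θ)*a + θ*M := EReal.coe_lt_coe_iff.1 hchain
      have h1θ : (1:ℝ)/2 ≤ 1 - θ := by linarith
      have haM : b - δ ≤ a := by nlinarith [hbreal, hθδ', hδ, hθpos.le, h1θ]
      have hfin : (t : EReal) ≤ ((a + q y : ℝ) : EReal) := by
        rw [EReal.coe_le_coe_iff]
        have ht₂δ : t₂ = t + 2*δ := ht₂δ'
        linarith [hb1', hyq, haM]
      rw [hay, ← EReal.coe_add]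
      exact hfin


end MoreauAux

open Filter Set Topology MoreauAux

/-- If proper convex lsc functions `φ_ε` (with common domain `D`) converge pointwise on `D`
to `φ` as `ε ↓ 0`, then their Moreau envelopes converge pointwise:
`φ_ε^α(x) → φ^α(x)` for every `α > 0` and every `x`. -/
theorem moreau_env_converges {m : ℕ}
    (φ : EuclideanSpace ℝ (Fin m) → EReal)
    (φs : ℝ → EuclideanSpace ℝ (Fin m) → EReal)
    (D : Set (EuclideanSpace ℝ (Fin m)))
    (hD : D = {x | φ x < ⊤}) (hDne : D.Nonempty)
    (hDeps : ∀ ε ∈ Set.Ioo (0 : ℝ) 1, {x | φs ε x < ⊤} = D)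
    (hconv : ∀ (x y : EuclideanSpace ℝ (Fin m)) (a b : ℝ), 0 ≤ a → 0 ≤ b → a + b = 1 →
      φ (a • x + b • y) ≤ (a : EReal) * φ x + (b : EReal) * φ y)
    (hconv' : ∀ ε ∈ Set.Ioo (0 : ℝ) 1,
      ∀ (x y : EuclideanSpace ℝ (Fin m)) (a b : ℝ), 0 ≤ a → 0 ≤ b → a + b = 1 →
        φs ε (a • x + b • y) ≤ (a : EReal) * φs ε x + (b : EReal) * φs ε y)
    (hlsc : LowerSemicontinuous φ)
    (hlsc' : ∀ ε ∈ Set.Ioo (0 : ℝ) 1, LowerSemicontinuous (φs ε))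
    -- uniform affine lower bound (so all the infima are finite and values are never `⊥`)
    (hlow : ∃ (v : EuclideanSpace ℝ (Fin m)) (c : ℝ),
      (∀ x, ((⟪v, x⟫ + c : ℝ) : EReal) ≤ φ x) ∧
      ∀ ε ∈ Set.Ioo (0 : ℝ) 1, ∀ x, ((⟪v, x⟫ + c : ℝ) : EReal) ≤ φs ε x)
    -- pointwise convergence on the common domain
    (hpt : ∀ x ∈ D, Filter.Tendsto (fun ε => φs ε x) (nhdsWithin 0 (Set.Ioi 0)) (nhds (φ x))) :
    ∀ α > (0 : ℝ), ∀ x, Filter.Tendsto (fun ε => moreauEnv (φs ε) α x)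
      (nhdsWithin 0 (Set.Ioi 0)) (nhds (moreauEnv φ α x)) := by
  intro α hα x
  obtain ⟨v, cst, hlv, hlv'⟩ := hlow
  set q : EuclideanSpace ℝ (Fin m) → ℝ := fun y => ‖y - x‖ ^ 2 / (2 * α) with hqdef
  have hqc : Continuous q := by
    apply Continuous.div_const
    exact (continuous_id.sub continuous_const).norm.pow 2
  have hunfold : ∀ g : EuclideanSpace ℝ (Fin m) → EReal,
      moreauEnv g α x = ⨅ y, g y + ((q y : ℝ) : EReal) := fun g => rfl
  have hbc : ∀ ε ∈ Set.Ioo (0:ℝ) 1, BinConvex (φs ε) := fun ε hε => hconv' ε hε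
  have hφreal : ∀ z ∈ D, φ z ≠ ⊤ ∧ φ z ≠ ⊥ := by
    intro z hz
    constructor
    · rw [hD, Set.mem_setOf_eq] at hz
      exact lt_top_iff_ne_top.1 hz
    · exact (lt_of_lt_of_le (EReal.bot_lt_coe _) (hlv z)).ne'
  have hmemD : ∀ a b : EuclideanSpace ℝ (Fin m), a ∈ D → b ∈ D →
      ∀ s : ℝ, 0 ≤ s → s ≤ 1 → ((1 - s) • a + s • b) ∈ D := by
    intro a b haD hbD s hs0 hs1
    rw [hD, Set.mem_setOf_eq]
    have h1 := hconv a b (1-s) s (by linarith) hs0 (by ring)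
    obtain ⟨ha2, ha3⟩ := hφreal a haD
    obtain ⟨hb2, hb3⟩ := hφreal b hbD
    refine lt_of_le_of_lt h1 (EReal.add_lt_top ?_ ?_)
    · rw [← EReal.coe_toReal ha2 ha3, ← EReal.coe_mul]
      exact EReal.coe_ne_top _
    · rw [← EReal.coe_toReal hb2 hb3, ← EReal.coe_mul]
      exact EReal.coe_ne_top _
  have hDconv : Convex ℝ D := by
    intro a haD b hbD sa sb hsa hsb hsum
    have h := hmemD a b haD hbD sb hsb (by linarith)
    rw [show (1 - sb) = sa by linarith] at h
    exact h
  obtain ⟨w, hw⟩ := hDne.intrinsicInterior hDconv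
  -- the key lower estimate
  have key : ∀ tt : ℝ, (tt : EReal) < moreauEnv φ α x →
      ∀ᶠ ε in 𝓝[>] (0:ℝ), ∀ y, (tt : EReal) ≤ φs ε y + ((q y : ℝ) : EReal) := by
    intro tt htt
    obtain ⟨t₂, ht₂a, ht₂b⟩ := EReal.exists_between_coe_real htt
    have htt₂ : tt < t₂ := EReal.coe_lt_coe_iff.1 ht₂a
    rw [hunfold φ] at ht₂b
    obtain ⟨R, hR, hfar⟩ := farfield v x cst α tt hα
    have hloc : ∀ y₀, ∃ ρ > 0, ∀ᶠ ε in 𝓝[>] (0:ℝ), ∀ y, dist y y₀ < ρ →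
        (tt:EReal) ≤ φs ε y + ((q y : ℝ) : EReal) := by
      intro y₀
      exact local_bound φ φs D hD hDeps hbc hlsc v cst hlv hlv' hpt hmemD w hw q hqc
        y₀ tt t₂ htt₂ (lt_of_lt_of_le ht₂b (iInf_le _ y₀))
    choose ρ hρ hev using hloc
    obtain ⟨s, -, hs⟩ := (isCompact_closedBall x R).elim_nhds_subcover
      (fun y₀ => Metric.ball y₀ (ρ y₀)) (fun y₀ _ => Metric.ball_mem_nhds _ (hρ y₀))
    have hIoo : ∀ᶠ ε in 𝓝[>] (0:ℝ), ε ∈ Set.Ioo (0:ℝ) 1 :=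
      Ioo_mem_nhdsGT_of_mem ⟨le_refl 0, one_pos⟩
    have hevs : ∀ᶠ ε in 𝓝[>] (0:ℝ), ∀ y₀ ∈ s, ∀ y, dist y y₀ < ρ y₀ →
        (tt:EReal) ≤ φs ε y + ((q y : ℝ) : EReal) :=
      (Filter.eventually_all_finset s).2 fun y₀ _ => hev y₀
    filter_upwards [hIoo, hevs] with ε hε1 hε2
    intro y
    by_cases hyK : y ∈ Metric.closedBall x R
    · obtain ⟨y₀, hy₀s, hyb⟩ := Set.mem_iUnion₂.1 (hs hyK)
      exact hε2 y₀ hy₀s y (Metric.mem_ball.1 hyb)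
    · have hyR : R ≤ ‖y - x‖ := by
        rw [Metric.mem_closedBall, not_le, dist_eq_norm] at hyK
        linarith
      calc (tt:EReal) ≤ ((⟪v,y⟫ + cst + q y : ℝ) : EReal) :=
            EReal.coe_le_coe_iff.2 (hfar y hyR)
        _ = ((⟪v,y⟫ + cst : ℝ):EReal) + ((q y : ℝ):EReal) := by rw [← EReal.coe_add]
        _ ≤ φs ε y + ((q y : ℝ) : EReal) := add_le_add_left (hlv' ε hε1 y) _
  refine tendsto_order.2 ⟨?_, ?_⟩
  · intro aa haa
    obtain ⟨t, hta, htb⟩ := EReal.exists_between_coe_real haa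
    filter_upwards [key t htb] with ε hε
    refine lt_of_lt_of_le hta ?_
    rw [hunfold]
    exact le_iInf fun y => hε y
  · intro aa haa
    obtain ⟨a', ha1, ha2⟩ := EReal.exists_between_coe_real haa
    rw [hunfold φ] at ha1
    obtain ⟨y₀, hy₀⟩ := iInf_lt_iff.1 ha1
    have hy₀D : y₀ ∈ D := by
      rw [hD, Set.mem_setOf_eq]
      by_contra h
      have h2 : φ y₀ = ⊤ := top_le_iff.1 (not_lt.1 h)
      rw [h2, EReal.top_add_coe] at hy₀
      exact not_top_lt hy₀
    have hφy₀ : φ y₀ < ((a' - q y₀ : ℝ) : EReal) := by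
      by_contra hcon
      push_neg at hcon
      have h3 := add_le_add_left hcon ((q y₀ : ℝ):EReal)
      rw [← EReal.coe_add, sub_add_cancel] at h3
      exact absurd (lt_of_le_of_lt h3 hy₀) (lt_irrefl _)
    have hev := (hpt y₀ hy₀D).eventually (gt_mem_nhds hφy₀)
    filter_upwards [hev] with ε hε
    rw [hunfold]
    calc (⨅ y, φs ε y + ((q y : ℝ):EReal)) ≤ φs ε y₀ + ((q y₀ : ℝ):EReal) := iInf_le _ y₀
      _ < ((a' - q y₀:ℝ):EReal) + ((q y₀ : ℝ):EReal) := EReal.add_lt_add_right_coe hε _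
      _ = (a' : EReal) := by rw [← EReal.coe_add, sub_add_cancel]
      _ < aa := ha2
end

section
/- Let u ∈ H := {u ∈ C([0,1];ℝᵐ) : u(0) = 0, u absolutely continuous with ∫₀¹|u̇|² ds < ∞} with ‖u‖²_H = ∫₀¹|u̇(s)|²ds ≤ 4R, and let σ : [0,1] → ℝ^{m×k} be measurable with ∫₀¹‖σ(t)‖²dt < ∞. For h, h₀ ∈ H with ‖h‖²_H, ‖h₀‖²_H ≤ 4R, if sup_{t∈[0,1]}|h(t) - h₀(t)| → 0 (along a sequence with the uniform H-norm bound), then sup_{t∈[0,1]} |∫₀ᵗ σ(s)(ḣ(s) - ḣ₀(s)) ds| → 0. -/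
open MeasureTheory
open scoped ENNReal NNReal

private lemma rpow_two' (x : ℝ) : x ^ (2:ℝ) = x ^ 2 := by
  rw [show (2:ℝ) = ((2:ℕ):ℝ) by norm_num, Real.rpow_natCast]

private lemma cs_aux {α : Type*} [MeasurableSpace α] {μ : Measure α} {F G : α → ℝ}
    (hFnn : ∀ x, 0 ≤ F x) (hGnn : ∀ x, 0 ≤ G x)
    (hFm : AEStronglyMeasurable F μ) (hGm : AEStronglyMeasurable G μ)
    (hF2 : Integrable (fun x => F x ^ 2) μ) (hG2 : Integrable (fun x => G x ^ 2) μ) :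
    ∫ x, F x * G x ∂μ ≤ Real.sqrt (∫ x, F x ^ 2 ∂μ) * Real.sqrt (∫ x, G x ^ 2 ∂μ) := by
  have hpq : Real.HolderConjugate 2 2 := Real.HolderConjugate.two_two
  have hFmem : MemLp F (ENNReal.ofReal 2) μ := by
    rw [show ENNReal.ofReal 2 = 2 by simp]
    exact (memLp_two_iff_integrable_sq hFm).2 hF2
  have hGmem : MemLp G (ENNReal.ofReal 2) μ := by
    rw [show ENNReal.ofReal 2 = 2 by simp]
    exact (memLp_two_iff_integrable_sq hGm).2 hG2
  have := MeasureTheory.integral_mul_le_Lp_mul_Lq_of_nonneg hpq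
    (Filter.Eventually.of_forall hFnn) (Filter.Eventually.of_forall hGnn) hFmem hGmem
  simp only [rpow_two'] at this
  simpa [Real.sqrt_eq_rpow] using this

private lemma interval_int_aux {E : Type*} [NormedAddCommGroup E] {f : ℝ → E}
    (hf : IntegrableOn f (Set.Icc 0 1) volume) {x y : ℝ}
    (hx : x ∈ Set.Icc (0:ℝ) 1) (hy : y ∈ Set.Icc (0:ℝ) 1) :
    IntervalIntegrable f volume x y := by
  rw [intervalIntegrable_iff]
  refine hf.mono_set ?_
  intro s hs
  rcases Set.mem_uIoc.1 hs with ⟨h1, h2⟩ | ⟨h1, h2⟩ <;>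
    exact ⟨by rcases hx with ⟨a1,a2⟩; rcases hy with ⟨b1,b2⟩; linarith,
           by rcases hx with ⟨a1,a2⟩; rcases hy with ⟨b1,b2⟩; linarith⟩

set_option maxHeartbeats 2000000 in
/-- If controls `hₙ` with uniformly bounded Cameron–Martin energy (`∫₀¹|ḣₙ|² ≤ 4R`)
converge uniformly to `h₀`, then the integrals `∫₀ᵗ σ(s)(ḣₙ(s) - ḣ₀(s)) ds` converge
to `0` uniformly in `t ∈ [0,1]`, for any `σ ∈ L²([0,1])`. -/
theorem control_integral_convergence {m k : ℕ}
    (σ : ℝ → (EuclideanSpace ℝ (Fin k) →L[ℝ] EuclideanSpace ℝ (Fin m)))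
    (hσmeas : AEStronglyMeasurable σ (volume.restrict (Set.Icc 0 1)))
    (hσL2 : IntegrableOn (fun t => ‖σ t‖ ^ 2) (Set.Icc 0 1) volume)
    (R : ℝ) (hR : 0 < R)
    (dh : ℕ → ℝ → EuclideanSpace ℝ (Fin k))
    (dh₀ : ℝ → EuclideanSpace ℝ (Fin k))
    (h : ℕ → ℝ → EuclideanSpace ℝ (Fin k))
    (h₀ : ℝ → EuclideanSpace ℝ (Fin k))
    (hdhmeas : ∀ n, AEStronglyMeasurable (dh n) (volume.restrict (Set.Icc 0 1)))
    (hdh₀meas : AEStronglyMeasurable dh₀ (volume.restrict (Set.Icc 0 1)))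
    (hdhL2 : ∀ n, IntegrableOn (fun t => ‖dh n t‖ ^ 2) (Set.Icc 0 1) volume)
    (hdh₀L2 : IntegrableOn (fun t => ‖dh₀ t‖ ^ 2) (Set.Icc 0 1) volume)
    (hh : ∀ n, ∀ t ∈ Set.Icc (0 : ℝ) 1, h n t = ∫ s in (0 : ℝ)..t, dh n s)
    (hh₀ : ∀ t ∈ Set.Icc (0 : ℝ) 1, h₀ t = ∫ s in (0 : ℝ)..t, dh₀ s)
    (henergy : ∀ n, (∫ t in (0 : ℝ)..1, ‖dh n t‖ ^ 2) ≤ 4 * R)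
    (henergy₀ : (∫ t in (0 : ℝ)..1, ‖dh₀ t‖ ^ 2) ≤ 4 * R)
    (hconv : Filter.Tendsto (fun n => sSup ((fun t => ‖h n t - h₀ t‖) '' Set.Icc 0 1))
      Filter.atTop (nhds 0)) :
    Filter.Tendsto
      (fun n => sSup ((fun t => ‖∫ s in (0 : ℝ)..t, σ s (dh n s - dh₀ s)‖) '' Set.Icc 0 1))
      Filter.atTop (nhds 0) := by
  classical
  set I : Set ℝ := Set.Icc (0:ℝ) 1 with hIdef
  have hmeasI : MeasurableSet I := measurableSet_Icc
  have hvolI : volume I ≠ ⊤ := by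
    rw [hIdef]; exact (measure_Icc_lt_top).ne
  set g : ℕ → ℝ → EuclideanSpace ℝ (Fin k) := fun n s => dh n s - dh₀ s with hgdef
  have hgmeas : ∀ n, AEStronglyMeasurable (g n) (volume.restrict I) :=
    fun n => (hdhmeas n).sub hdh₀meas
  -- square integrability of g with bound 16R
  have hgsq : ∀ n, IntegrableOn (fun s => ‖g n s‖ ^ 2) I volume := by
    intro n
    refine Integrable.mono' (((hdhL2 n).const_mul 2).add ((hdh₀L2).const_mul 2))
      (((hgmeas n).norm.mul (hgmeas n).norm).congr
        (Filter.Eventually.of_forall fun s => (pow_two ‖g n s‖).symm))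
      (Filter.Eventually.of_forall fun s => ?_)
    have h1 := norm_sub_le (dh n s) (dh₀ s)
    have h2 : (0:ℝ) ≤ ‖dh n s‖ := norm_nonneg _
    have h3 : (0:ℝ) ≤ ‖dh₀ s‖ := norm_nonneg _
    have h4 : (0:ℝ) ≤ ‖dh n s - dh₀ s‖ := norm_nonneg _
    have habs : ‖‖g n s‖ ^ 2‖ = ‖dh n s - dh₀ s‖ ^ 2 := by
      simp only [hgdef, Real.norm_eq_abs]
      exact abs_of_nonneg (by positivity)
    rw [habs]
    simp only [Pi.add_apply]
    nlinarith [sq_nonneg (‖dh n s‖ - ‖dh₀ s‖)]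
  have henI : ∀ n, ∫ s in I, ‖dh n s‖ ^ 2 ≤ 4 * R := by
    intro n
    rw [hIdef, MeasureTheory.integral_Icc_eq_integral_Ioc]
    have := henergy n
    rwa [intervalIntegral.integral_of_le zero_le_one] at this
  have hen₀I : ∫ s in I, ‖dh₀ s‖ ^ 2 ≤ 4 * R := by
    rw [hIdef, MeasureTheory.integral_Icc_eq_integral_Ioc]
    rwa [intervalIntegral.integral_of_le zero_le_one] at henergy₀
  have hgsqB : ∀ n, ∫ s in I, ‖g n s‖ ^ 2 ≤ 16 * R := by
    intro n
    have hle : ∫ s in I, ‖g n s‖ ^ 2 ≤ ∫ s in I, (2 * ‖dh n s‖ ^ 2 + 2 * ‖dh₀ s‖ ^ 2) := by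
      refine integral_mono (hgsq n) (((hdhL2 n).const_mul 2).add ((hdh₀L2).const_mul 2))
        fun s => ?_
      have h1 := norm_sub_le (dh n s) (dh₀ s)
      have h2 : (0:ℝ) ≤ ‖dh n s‖ := norm_nonneg _
      have h3 : (0:ℝ) ≤ ‖dh₀ s‖ := norm_nonneg _
      have h4 : (0:ℝ) ≤ ‖dh n s - dh₀ s‖ := norm_nonneg _
      simp only [hgdef]
      nlinarith [sq_nonneg (‖dh n s‖ - ‖dh₀ s‖)]
    rw [integral_add ((hdhL2 n).const_mul 2) ((hdh₀L2).const_mul 2),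
      integral_const_mul, integral_const_mul] at hle
    have := henI n
    linarith
  -- L¹ integrability from L²
  have l1aux : ∀ (f : ℝ → EuclideanSpace ℝ (Fin k)), AEStronglyMeasurable f (volume.restrict I) →
      IntegrableOn (fun s => ‖f s‖ ^ 2) I volume → IntegrableOn f I volume := by
    intro f hm h2
    have hintc : IntegrableOn (fun _ : ℝ => (1:ℝ)) I volume :=
      integrableOn_const hvolI
    refine Integrable.mono' (hintc.add h2) hm
      (Filter.Eventually.of_forall fun s => ?_)
    simp only [Pi.add_apply]
    nlinarith [norm_nonneg (f s), sq_nonneg (‖f s‖ - 1)]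
  have hgL1 : ∀ n, IntegrableOn (g n) I volume := fun n => l1aux _ (hgmeas n) (hgsq n)
  have hdhL1 : ∀ n, IntegrableOn (dh n) I volume := fun n => l1aux _ (hdhmeas n) (hdhL2 n)
  have hdh₀L1 : IntegrableOn dh₀ I volume := l1aux _ hdh₀meas hdh₀L2
  have h0I : (0:ℝ) ∈ I := ⟨le_rfl, zero_le_one⟩
  have hgnormB : ∀ n, ∫ s in I, ‖g n s‖ ≤ 1 + 16 * R := by
    intro n
    have hintc : IntegrableOn (fun _ : ℝ => (1:ℝ)) I volume :=
      integrableOn_const hvolI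
    have hle : ∫ s in I, ‖g n s‖ ≤ ∫ s in I, (1 + ‖g n s‖ ^ 2) := by
      refine integral_mono (hgL1 n).norm ?_ fun s => ?_
      · exact hintc.add (hgsq n)
      · nlinarith [norm_nonneg (g n s), sq_nonneg (‖g n s‖ - 1)]
    rw [integral_add hintc (hgsq n), setIntegral_const] at hle
    have hv : volume.real I = 1 := by
      rw [measureReal_def, hIdef, Real.volume_Icc]; norm_num
    rw [hv] at hle
    simp only [smul_eq_mul, one_mul, mul_one] at hle
    have := hgsqB n
    linarith [hle]
  -- MemLp of σ and its indicator extension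
  have hσmem : MemLp σ 2 (volume.restrict I) := (memLp_two_iff_integrable_sq_norm hσmeas).2 hσL2
  have hσ'mem : MemLp (I.indicator σ) (ENNReal.ofReal 2) volume := by
    rw [show ENNReal.ofReal 2 = 2 by simp]; refine (memLp_indicator_iff_restrict (f := σ) hmeasI).2 ?_
    exact hσmem
  -- the identity ∫₀ᵘ g = h n u - h₀ u
  have hG : ∀ n, ∀ u ∈ I, (∫ s in (0:ℝ)..u, g n s) = h n u - h₀ u := by
    intro n u hu
    rw [hh n u hu, hh₀ u hu,
      ← intervalIntegral.integral_sub (interval_int_aux (hdhL1 n) h0I hu)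
        (interval_int_aux hdh₀L1 h0I hu)]
  -- uniform bound on ‖h n u - h₀ u‖
  have hΔbd : ∀ n, ∀ u ∈ I, ‖h n u - h₀ u‖ ≤ 1 + 16 * R := by
    intro n u hu
    rw [← hG n u hu]
    calc ‖∫ s in (0:ℝ)..u, g n s‖ ≤ ∫ s in (0:ℝ)..u, ‖g n s‖ :=
          intervalIntegral.norm_integral_le_integral_norm hu.1
      _ = ∫ s in Set.Ioc 0 u, ‖g n s‖ := intervalIntegral.integral_of_le hu.1
      _ ≤ ∫ s in I, ‖g n s‖ := by
          refine setIntegral_mono_set (hgL1 n).norm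
            (Filter.Eventually.of_forall fun s => norm_nonneg _) ?_
          exact (Set.Ioc_subset_Icc_self.trans (Set.Icc_subset_Icc le_rfl hu.2)).eventuallyLE
      _ ≤ 1 + 16 * R := hgnormB n
  have hsuple : ∀ n θ, sSup ((fun t => ‖h n t - h₀ t‖) '' I) < θ →
      ∀ u ∈ I, ‖h n u - h₀ u‖ < θ := by
    intro n θ hθ u hu
    have hbdd : BddAbove ((fun t => ‖h n t - h₀ t‖) '' I) := by
      refine ⟨1 + 16 * R, ?_⟩
      rintro x ⟨v, hv, rfl⟩
      exact hΔbd n v hv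
    exact lt_of_le_of_lt (le_csSup hbdd (Set.mem_image_of_mem _ hu)) hθ
  -- main ε-argument
  rw [Metric.tendsto_atTop] at hconv ⊢
  intro ε hε
  -- density of continuous compactly supported functions in L²
  have hη : (0:ℝ) < (ε/3)^2 / (16*R) := by positivity
  obtain ⟨φ, φsupp, φclose, φcont, φmem⟩ :=
    hσ'mem.exists_hasCompactSupport_integral_rpow_sub_le (by norm_num : (0:ℝ) < 2) hη
  simp only [rpow_two'] at φclose
  have hφm : AEStronglyMeasurable φ (volume.restrict I) :=
    φcont.aestronglyMeasurable.restrict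
  have hdiffint : Integrable (fun x => ‖I.indicator σ x - φ x‖ ^ 2) volume := by
    have h1 : MemLp (I.indicator σ - φ) (ENNReal.ofReal 2) volume := hσ'mem.sub φmem
    rw [show ENNReal.ofReal 2 = (2:ℝ≥0∞) by simp] at h1
    have := (memLp_two_iff_integrable_sq_norm h1.aestronglyMeasurable).1 h1
    simpa [Pi.sub_apply] using this
  have hσφsq : IntegrableOn (fun s => ‖σ s - φ s‖ ^ 2) I volume := by
    refine (hdiffint.restrict (s := I)).congr ?_
    refine (ae_restrict_iff' hmeasI).2 (Filter.Eventually.of_forall fun s hs => ?_)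
    simp only [Set.indicator_of_mem hs]
  have hσφsqB : ∫ s in I, ‖σ s - φ s‖ ^ 2 ≤ (ε/3)^2 / (16*R) := by
    have h1 : ∫ s in I, ‖σ s - φ s‖ ^ 2 = ∫ s in I, ‖I.indicator σ s - φ s‖ ^ 2 := by
      refine integral_congr_ae ((ae_restrict_iff' hmeasI).2
        (Filter.Eventually.of_forall fun s hs => ?_))
      simp only [Set.indicator_of_mem hs]
    have h2 : ∫ s in I, ‖I.indicator σ s - φ s‖ ^ 2 ≤ ∫ x, ‖I.indicator σ x - φ x‖ ^ 2 := by
      exact setIntegral_le_integral hdiffint (Filter.Eventually.of_forall fun x => by positivity)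
    linarith [φclose]
  -- bound and uniform continuity of φ on I
  obtain ⟨C, hC⟩ := (isCompact_Icc (a := (0:ℝ)) (b := 1)).exists_bound_of_continuousOn
    φcont.continuousOn
  have hC0 : 0 ≤ C := le_trans (norm_nonneg (φ 0)) (hC 0 h0I)
  have hucφ := (isCompact_Icc (a := (0:ℝ)) (b := 1)).uniformContinuousOn_of_continuous
    φcont.continuousOn
  rw [Metric.uniformContinuousOn_iff] at hucφ
  have h16R : (0:ℝ) < 1 + 16 * R := by nlinarith
  set ε₂ : ℝ := ε / (3 * (1 + 16 * R)) with hε₂def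
  have hε₂pos : 0 < ε₂ := div_pos hε (by nlinarith)
  obtain ⟨δ, hδpos, hδ⟩ := hucφ ε₂ hε₂pos
  obtain ⟨N₀, hN₀⟩ := exists_nat_one_div_lt hδpos
  set N : ℕ := N₀ + 1 with hNdef
  have hNpos : (0:ℝ) < (N:ℝ) := by positivity
  have hNδ : 1 / (N:ℝ) < δ := by
    have : ((N:ℝ)) = (N₀:ℝ) + 1 := by push_cast [hNdef]; ring
    rw [this]; exact hN₀
  set P : ℝ := 2 * C * (N:ℝ) with hPdef
  have hP0 : 0 ≤ P := by positivity
  set θ : ℝ := ε / (3 * (P + 1)) with hθdef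
  have hθpos : 0 < θ := div_pos hε (by nlinarith)
  obtain ⟨n₀, hn₀⟩ := hconv θ hθpos
  refine ⟨n₀, fun n hn => ?_⟩
  have hsupn : ∀ u ∈ I, ‖h n u - h₀ u‖ < θ := by
    have h1 := hn₀ n hn
    rw [Real.dist_eq, sub_zero] at h1
    exact hsuple n θ (lt_of_le_of_lt (le_abs_self _) h1) 
  -- the key pointwise estimate
  have key : ∀ t ∈ I, ‖∫ s in (0:ℝ)..t, σ s (g n s)‖ ≤ ε/3 + ε/3 + P * θ := by
    intro t ht
    obtain ⟨ht0, ht1⟩ := ht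
    have htI : t ∈ I := ⟨ht0, ht1⟩
    -- integrability of the two parts
    have hAm : AEStronglyMeasurable (fun s => (σ s - φ s) (g n s)) (volume.restrict I) :=
      isBoundedBilinearMap_apply.continuous.comp_aestronglyMeasurable
        ((hσmeas.sub hφm).prodMk (hgmeas n))
    have hBm : AEStronglyMeasurable (fun s => (φ s) (g n s)) (volume.restrict I) :=
      isBoundedBilinearMap_apply.continuous.comp_aestronglyMeasurable
        (hφm.prodMk (hgmeas n))
    have hAint : IntegrableOn (fun s => (σ s - φ s) (g n s)) I volume := by
      refine Integrable.mono' (hσφsq.add (hgsq n)) hAm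
        (Filter.Eventually.of_forall fun s => ?_)
      simp only [Pi.add_apply]
      refine le_trans ((σ s - φ s).le_opNorm _) ?_
      nlinarith [norm_nonneg (σ s - φ s), norm_nonneg (g n s),
        sq_nonneg (‖σ s - φ s‖ - ‖g n s‖)]
    have hBint : IntegrableOn (fun s => (φ s) (g n s)) I volume := by
      refine Integrable.mono' ((hgL1 n).norm.const_mul C) hBm
        ((ae_restrict_iff' hmeasI).2 (Filter.Eventually.of_forall fun s hs => ?_))
      exact le_trans ((φ s).le_opNorm _)
        (mul_le_mul_of_nonneg_right (hC s hs) (norm_nonneg _))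
    have hprodint : IntegrableOn (fun s => ‖σ s - φ s‖ * ‖g n s‖) I volume := by
      refine Integrable.mono' (hσφsq.add (hgsq n)) ((hσmeas.sub hφm).norm.mul (hgmeas n).norm)
        (Filter.Eventually.of_forall fun s => ?_)
      simp only [Pi.add_apply, Real.norm_eq_abs,
        abs_of_nonneg (mul_nonneg (norm_nonneg _) (norm_nonneg _))]
      nlinarith [norm_nonneg (σ s - φ s), norm_nonneg (g n s),
        sq_nonneg (‖σ s - φ s‖ - ‖g n s‖)]
    -- Term A bound
    have hA : ‖∫ s in (0:ℝ)..t, (σ s - φ s) (g n s)‖ ≤ ε/3 := by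
      have h1 : ‖∫ s in (0:ℝ)..t, (σ s - φ s) (g n s)‖ ≤
          ∫ s in Set.Ioc 0 t, ‖(σ s - φ s) (g n s)‖ := by
        calc ‖∫ s in (0:ℝ)..t, (σ s - φ s) (g n s)‖
            ≤ ∫ s in (0:ℝ)..t, ‖(σ s - φ s) (g n s)‖ :=
              intervalIntegral.norm_integral_le_integral_norm ht0
          _ = ∫ s in Set.Ioc 0 t, ‖(σ s - φ s) (g n s)‖ :=
              intervalIntegral.integral_of_le ht0
      have h3 : ∫ s in Set.Ioc 0 t, ‖(σ s - φ s) (g n s)‖ ≤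
          ∫ s in I, ‖(σ s - φ s) (g n s)‖ := by
        refine setIntegral_mono_set hAint.norm
          (Filter.Eventually.of_forall fun s => norm_nonneg _) ?_
        exact (Set.Ioc_subset_Icc_self.trans (Set.Icc_subset_Icc le_rfl ht1)).eventuallyLE
      have h4 : ∫ s in I, ‖(σ s - φ s) (g n s)‖ ≤ ∫ s in I, ‖σ s - φ s‖ * ‖g n s‖ :=
        integral_mono hAint.norm hprodint fun s => (σ s - φ s).le_opNorm _
      have h5 := cs_aux (fun s => norm_nonneg (σ s - φ s)) (fun s => norm_nonneg (g n s))
        (hσmeas.sub hφm).norm (hgmeas n).norm hσφsq (hgsq n)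
      have h6 : Real.sqrt (∫ s in I, ‖σ s - φ s‖ ^ 2) ≤ Real.sqrt ((ε/3)^2 / (16*R)) :=
        Real.sqrt_le_sqrt hσφsqB
      have h7 : Real.sqrt (∫ s in I, ‖g n s‖ ^ 2) ≤ Real.sqrt (16*R) :=
        Real.sqrt_le_sqrt (hgsqB n)
      have h8 : Real.sqrt ((ε/3)^2 / (16*R)) * Real.sqrt (16*R) = ε/3 := by
        rw [← Real.sqrt_mul (by positivity), div_mul_cancel₀ _ (by positivity : (16*R) ≠ 0)]
        exact Real.sqrt_sq (by positivity)
      have h9 : Real.sqrt (∫ s in I, ‖σ s - φ s‖ ^ 2) * Real.sqrt (∫ s in I, ‖g n s‖ ^ 2) ≤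
          Real.sqrt ((ε/3)^2 / (16*R)) * Real.sqrt (16*R) :=
        mul_le_mul h6 h7 (Real.sqrt_nonneg _) (Real.sqrt_nonneg _)
      linarith
    -- Term B: partition of [0, t]
    set a : ℕ → ℝ := fun j => min t ((j:ℝ)/(N:ℝ)) with hadef
    have ha0 : a 0 = 0 := by
      simp only [hadef, Nat.cast_zero, zero_div]
      exact min_eq_right ht0
    have haN : a N = t := by
      simp only [hadef, div_self hNpos.ne']
      exact min_eq_left ht1
    have haI : ∀ j, a j ∈ I := fun j =>
      ⟨le_min ht0 (by positivity), (min_le_left _ _).trans ht1⟩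
    have hamono : ∀ j : ℕ, a j ≤ a (j+1) := by
      intro j
      refine min_le_min le_rfl ?_
      gcongr
      push_cast
      linarith
    have hstep : ∀ j : ℕ, a (j+1) - a j ≤ 1/(N:ℝ) := by
      intro j
      have hc : (((j:ℕ)+1:ℕ):ℝ)/(N:ℝ) = (j:ℝ)/(N:ℝ) + 1/(N:ℝ) := by push_cast; ring
      rcases le_total t ((j:ℝ)/(N:ℝ)) with h'|h'
      · have e1 : a j = t := min_eq_left h'
        have e2 : a (j+1) = t := by
          refine min_eq_left (h'.trans ?_)
          rw [hc]; linarith [le_of_lt (by positivity : (0:ℝ) < 1/(N:ℝ))]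
        rw [e1, e2]; simp
      · have e1 : a j = (j:ℝ)/(N:ℝ) := min_eq_right h'
        have e2 : a (j+1) ≤ (((j:ℕ)+1:ℕ):ℝ)/(N:ℝ) := min_le_right _ _
        rw [e1]; rw [hc] at e2; linarith
    have hgII : ∀ x y, x ∈ I → y ∈ I → IntervalIntegrable (g n) volume x y :=
      fun x y hx hy => interval_int_aux (hgL1 n) hx hy
    -- split the integral of the φ-part along the partition
    have hsplit : (∫ s in (0:ℝ)..t, (φ s) (g n s)) =
        ∑ j ∈ Finset.range N, ∫ s in a j..a (j+1), (φ s) (g n s) := by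
      rw [intervalIntegral.sum_integral_adjacent_intervals
        (fun j _ => interval_int_aux hBint (haI j) (haI (j+1))), ha0, haN]
    -- per-piece estimate
    have hpiece : ∀ j, ‖∫ s in a j..a (j+1), (φ s) (g n s)‖ ≤
        (∫ s in a j..a (j+1), ε₂ * ‖g n s‖) + 2*C*θ := by
      intro j
      have hj1 : a j ∈ I := haI j
      have hj2 : a (j+1) ∈ I := haI (j+1)
      have hsub : ∀ s, (φ s) (g n s) = (φ s - φ (a j)) (g n s) + (φ (a j)) (g n s) := by
        intro s; simp [ContinuousLinearMap.sub_apply]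
      have hIIc : IntervalIntegrable (fun s => (φ (a j)) (g n s)) volume (a j) (a (j+1)) :=
        ⟨(φ (a j)).integrable_comp (hgII _ _ hj1 hj2).1,
         (φ (a j)).integrable_comp (hgII _ _ hj1 hj2).2⟩
      have hIId : IntervalIntegrable (fun s => (φ s - φ (a j)) (g n s)) volume
          (a j) (a (j+1)) := by
        have h1 := (interval_int_aux hBint hj1 hj2).sub hIIc
        simpa [ContinuousLinearMap.sub_apply] using h1
      have hdecomp : (∫ s in a j..a (j+1), (φ s) (g n s)) =
          (∫ s in a j..a (j+1), (φ s - φ (a j)) (g n s)) +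
          ∫ s in a j..a (j+1), (φ (a j)) (g n s) := by
        rw [← intervalIntegral.integral_add hIId hIIc]
        exact intervalIntegral.integral_congr fun s _ => hsub s
      -- second piece
      have hsub2 : (∫ s in a j..a (j+1), g n s) =
          (h n (a (j+1)) - h₀ (a (j+1))) - (h n (a j) - h₀ (a j)) := by
        rw [← intervalIntegral.integral_interval_sub_left (hgII 0 (a (j+1)) h0I hj2)
          (hgII 0 (a j) h0I hj1), hG n _ hj2, hG n _ hj1]
      have hsecond : ‖∫ s in a j..a (j+1), (φ (a j)) (g n s)‖ ≤ 2*C*θ := by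
        rw [ContinuousLinearMap.intervalIntegral_comp_comm _ (hgII _ _ hj1 hj2), hsub2]
        refine le_trans ((φ (a j)).le_opNorm _) ?_
        have hx : ‖h n (a (j+1)) - h₀ (a (j+1)) - (h n (a j) - h₀ (a j))‖ ≤ θ + θ :=
          le_trans (norm_sub_le _ _)
            (add_le_add (hsupn _ hj2).le (hsupn _ hj1).le)
        calc ‖φ (a j)‖ * ‖h n (a (j+1)) - h₀ (a (j+1)) - (h n (a j) - h₀ (a j))‖
            ≤ C * (θ + θ) := mul_le_mul (hC _ hj1) hx (norm_nonneg _) hC0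
          _ = 2*C*θ := by ring
      -- first piece
      have hfirst : ‖∫ s in a j..a (j+1), (φ s - φ (a j)) (g n s)‖ ≤
          ∫ s in a j..a (j+1), ε₂ * ‖g n s‖ := by
        refine le_trans (intervalIntegral.norm_integral_le_integral_norm (hamono j)) ?_
        refine intervalIntegral.integral_mono_on (hamono j) hIId.norm
          ((hgII _ _ hj1 hj2).norm.const_mul ε₂) fun s hs => ?_
        have hsI : s ∈ I := ⟨hj1.1.trans hs.1, hs.2.trans hj2.2⟩
        have hd : dist s (a j) < δ := by
          rw [Real.dist_eq, abs_of_nonneg (by linarith [hs.1] : (0:ℝ) ≤ s - a j)]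
          have h1 := hstep j
          have h2 := hs.2
          linarith
        have hφd := hδ s hsI (a j) hj1 hd
        refine le_trans ((φ s - φ (a j)).le_opNorm _) ?_
        refine mul_le_mul_of_nonneg_right ?_ (norm_nonneg _)
        rw [← dist_eq_norm]
        exact hφd.le
      calc ‖∫ s in a j..a (j+1), (φ s) (g n s)‖
          ≤ ‖∫ s in a j..a (j+1), (φ s - φ (a j)) (g n s)‖ +
            ‖∫ s in a j..a (j+1), (φ (a j)) (g n s)‖ := by
            rw [hdecomp]; exact norm_add_le _ _
        _ ≤ (∫ s in a j..a (j+1), ε₂ * ‖g n s‖) + 2*C*θ := add_le_add hfirst hsecond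
    -- sum the per-piece bounds
    have hsum2 : ∑ j ∈ Finset.range N, ∫ s in a j..a (j+1), ε₂ * ‖g n s‖ =
        ∫ s in (0:ℝ)..t, ε₂ * ‖g n s‖ := by
      rw [intervalIntegral.sum_integral_adjacent_intervals
        (fun j _ => (hgII _ _ (haI j) (haI (j+1))).norm.const_mul ε₂), ha0, haN]
    have hgt : ∫ s in (0:ℝ)..t, ‖g n s‖ ≤ 1 + 16*R := by
      rw [intervalIntegral.integral_of_le ht0]
      refine le_trans (setIntegral_mono_set (hgL1 n).norm
        (Filter.Eventually.of_forall fun s => norm_nonneg _)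
        (Set.Ioc_subset_Icc_self.trans (Set.Icc_subset_Icc le_rfl ht1)).eventuallyLE) ?_
      exact hgnormB n
    have hB : ‖∫ s in (0:ℝ)..t, (φ s) (g n s)‖ ≤ ε/3 + P*θ := by
      rw [hsplit]
      refine le_trans (norm_sum_le _ _) ?_
      refine le_trans (Finset.sum_le_sum fun j _ => hpiece j) ?_
      rw [Finset.sum_add_distrib, hsum2, Finset.sum_const, Finset.card_range, nsmul_eq_mul]
      have e1 : ∫ s in (0:ℝ)..t, ε₂ * ‖g n s‖ = ε₂ * ∫ s in (0:ℝ)..t, ‖g n s‖ := by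
        rw [intervalIntegral.integral_const_mul]
      have e2 : ε₂ * ∫ s in (0:ℝ)..t, ‖g n s‖ ≤ ε₂ * (1 + 16*R) :=
        mul_le_mul_of_nonneg_left hgt hε₂pos.le
      have e3 : ε₂ * (1 + 16*R) = ε/3 := by
        rw [hε₂def]; field_simp
      have e4 : (N:ℝ) * (2*C*θ) = P * θ := by rw [hPdef]; ring
      rw [e1, e4]
      linarith
    -- combine
    have hsplitAB : (∫ s in (0:ℝ)..t, σ s (g n s)) =
        (∫ s in (0:ℝ)..t, (σ s - φ s) (g n s)) + ∫ s in (0:ℝ)..t, (φ s) (g n s) := by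
      rw [← intervalIntegral.integral_add (interval_int_aux hAint h0I htI)
        (interval_int_aux hBint h0I htI)]
      exact intervalIntegral.integral_congr fun s _ => by
        simp [ContinuousLinearMap.sub_apply]
    rw [hsplitAB]
    refine le_trans (norm_add_le _ _) ?_
    linarith
  -- conclude
  have hKlt : ε/3 + ε/3 + P*θ < ε := by
    have h1 : P * θ < ε/3 := by
      have h2 : P * θ = (ε*P) / (3*(P+1)) := by rw [hθdef]; ring
      rw [h2, div_lt_div_iff₀ (by nlinarith) (by norm_num : (0:ℝ) < 3)]
      nlinarith
    linarith
  have hnn : (0:ℝ) ≤ ε/3 + ε/3 + P*θ := by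
    have h1 : (0:ℝ) ≤ P * θ := mul_nonneg hP0 hθpos.le
    have h2 : (0:ℝ) ≤ ε / 3 := by linarith
    linarith
  have hS_le : sSup ((fun t => ‖∫ s in (0:ℝ)..t, σ s (g n s)‖) '' I) ≤ ε/3 + ε/3 + P*θ := by
    refine Real.sSup_le ?_ hnn
    rintro x ⟨t, ht, rfl⟩
    exact key t ht
  have hS_nn : 0 ≤ sSup ((fun t => ‖∫ s in (0:ℝ)..t, σ s (g n s)‖) '' I) := by
    refine Real.sSup_nonneg ?_
    rintro x ⟨t, ht, rfl⟩
    exact norm_nonneg _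
  rw [Real.dist_eq, sub_zero, abs_of_nonneg hS_nn]
  exact lt_of_le_of_lt hS_le hKlt
end
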